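/- Under the hypotheses on a₀, l and a, the primitive G(y) = G₀(|y|), where G₀(t) = ∫₀ᵗ a₀(s)s ds, satisfies (c₁/(p(p−1)))·|y|^p ≤ G(y) ≤ c₅(1 + |y|^p) for some constant c₅ > 0 and all y ∈ ℝᴺ. -/

import Mathlib

open Set Filter MeasureTheory intervalIntegral

set_option maxHeartbeats 1000000 in
theorem stmt_4 {N : ℕ} (hN : 1 ≤ N)
    (s p : ℝ) (hs : 1 ≤ s) (hsp : s < p)
    (l l' : ℝ → ℝ) (chat c₀ c₁ c₂ : ℝ)
    (hchat : 0 < chat) (hc₀ : 0 < c₀) (hc₁ : 0 < c₁) (hc₂ : 0 < c₂)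
    (hl_pos : ∀ t, 0 < t → 0 < l t)
    (hl_deriv : ∀ t, 0 < t → HasDerivAt l (l' t) t)
    (hl'_cont : ContinuousOn l' (Ioi 0))
    (hl_ratio : ∀ t, 0 < t → chat ≤ l' t * t / l t ∧ l' t * t / l t ≤ c₀)
    (hl_bound : ∀ t, 0 < t →
      c₁ * t ^ (p - 1) ≤ l t ∧ l t ≤ c₂ * (t ^ (s - 1) + t ^ (p - 1)))
    (a₀ a₀' : ℝ → ℝ)
    (ha₀_pos : ∀ t, 0 < t → 0 < a₀ t)
    (ha₀_deriv : ∀ t, 0 < t → HasDerivAt a₀ (a₀' t) t)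
    (ha₀'_cont : ContinuousOn a₀' (Ioi 0))
    (ha₀_mono : StrictMonoOn a₀ (Ioi 0))
    (ha₀_lim : Tendsto (fun t => a₀ t * t) (nhdsWithin 0 (Ioi 0)) (nhds 0))
    (a : EuclideanSpace ℝ (Fin N) → EuclideanSpace ℝ (Fin N))
    (ha : ∀ y, y ≠ 0 → a y = a₀ ‖y‖ • y) (ha0 : a 0 = 0)
    (Da : EuclideanSpace ℝ (Fin N) →
      (EuclideanSpace ℝ (Fin N) →L[ℝ] EuclideanSpace ℝ (Fin N)))
    (hDa : ∀ y, y ≠ 0 → HasFDerivAt a (Da y) y)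
    (c₃ : ℝ) (hc₃ : 0 < c₃)
    (hDa_bound : ∀ y, y ≠ 0 → ‖Da y‖ ≤ c₃ * l ‖y‖ / ‖y‖)
    (hDa_coerc : ∀ y, y ≠ 0 → ∀ ξ : EuclideanSpace ℝ (Fin N),
      (l ‖y‖ / ‖y‖) * ‖ξ‖ ^ 2 ≤ inner ℝ (Da y ξ) ξ) :
    ∀ G₀ : ℝ → ℝ, (∀ t, G₀ t = ∫ u in (0:ℝ)..t, a₀ u * u) →
      ∃ c₅, 0 < c₅ ∧ ∀ y : EuclideanSpace ℝ (Fin N),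
        c₁ / (p * (p - 1)) * ‖y‖ ^ p ≤ G₀ ‖y‖ ∧ G₀ ‖y‖ ≤ c₅ * (1 + ‖y‖ ^ p) := by
  intro G₀ hG₀
  have hp1 : (0:ℝ) < p - 1 := by linarith
  have hp : (0:ℝ) < p := by linarith
  -- unit vector
  set e : EuclideanSpace ℝ (Fin N) := EuclideanSpace.single (⟨0, hN⟩ : Fin N) (1:ℝ) with he
  have hne : ‖e‖ = 1 := by rw [he, EuclideanSpace.norm_single]; simp
  -- derivative of f := a₀ t * t
  have hfd : ∀ t : ℝ, 0 < t → HasDerivAt (fun u => a₀ u * u) (a₀' t * t + a₀ t) t := by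
    intro t ht
    simpa using (ha₀_deriv t ht).fun_mul (hasDerivAt_id' t)
  -- key derivative bounds
  have key : ∀ t : ℝ, 0 < t →
      l t / t ≤ a₀' t * t + a₀ t ∧ a₀' t * t + a₀ t ≤ c₃ * l t / t := by
    intro t ht
    set y : EuclideanSpace ℝ (Fin N) := t • e with hy
    have hyn : ‖y‖ = t := by rw [hy, norm_smul, hne, mul_one, Real.norm_eq_abs, abs_of_pos ht]
    have hy0 : y ≠ 0 := by
      intro h
      rw [h, norm_zero] at hyn
      exact absurd hyn.symm (ne_of_gt ht)
    have hc : HasDerivAt (fun r : ℝ => r • e) e t := by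
      simpa using (hasDerivAt_id t).smul_const e
    have hcomp : HasDerivAt (fun r : ℝ => a (r • e)) (Da y e) t :=
      (hDa y hy0).comp_hasDerivAt t hc
    have heq : (fun r : ℝ => (a₀ r * r) • e) =ᶠ[nhds t] fun r : ℝ => a (r • e) := by
      filter_upwards [eventually_gt_nhds ht] with r hr
      have hrn : ‖r • e‖ = r := by rw [norm_smul, hne, mul_one, Real.norm_eq_abs, abs_of_pos hr]
      have hr0 : r • e ≠ 0 := by
        intro h
        rw [h, norm_zero] at hrn
        exact absurd hrn.symm (ne_of_gt hr)
      rw [ha _ hr0, hrn, smul_smul]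
    have hcomp' : HasDerivAt (fun r : ℝ => (a₀ r * r) • e) (Da y e) t :=
      hcomp.congr_of_eventuallyEq heq
    have hcomp2 : HasDerivAt (fun r : ℝ => (a₀ r * r) • e) ((a₀' t * t + a₀ t) • e) t :=
      (hfd t ht).smul_const e
    have hDe : Da y e = (a₀' t * t + a₀ t) • e := hcomp'.unique hcomp2
    have h1 := hDa_coerc y hy0 e
    rw [hyn, hDe, real_inner_smul_left, real_inner_self_eq_norm_sq, hne] at h1
    have h3 : ‖Da y e‖ ≤ c₃ * l t / t := by
      calc ‖Da y e‖ ≤ ‖Da y‖ * ‖e‖ := (Da y).le_opNorm e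
        _ = ‖Da y‖ := by rw [hne, mul_one]
        _ ≤ c₃ * l ‖y‖ / ‖y‖ := hDa_bound y hy0
        _ = c₃ * l t / t := by rw [hyn]
    rw [hDe, norm_smul, hne, mul_one, Real.norm_eq_abs] at h3
    exact ⟨by simpa using h1, le_trans (le_abs_self _) h3⟩
  -- lower bound on a₀ t * t
  have glow : ∀ t : ℝ, 0 < t → c₁ / (p - 1) * t ^ (p - 1) ≤ a₀ t * t := by
    intro t ht
    set g : ℝ → ℝ := fun u => a₀ u * u - c₁ / (p - 1) * u ^ (p - 1) with hg
    have hgd : ∀ u : ℝ, 0 < u →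
        HasDerivAt g (a₀' u * u + a₀ u - c₁ * u ^ (p - 2)) u := by
      intro u hu
      have h2 : HasDerivAt (fun v : ℝ => c₁ / (p - 1) * v ^ (p - 1))
          (c₁ / (p - 1) * ((p - 1) * u ^ (p - 1 - 1))) u :=
        (Real.hasDerivAt_rpow_const (Or.inl (ne_of_gt hu))).const_mul _
      have h3 := (hfd u hu).sub h2
      convert h3 using 1
      · rfl
      · rfl
      · rfl
      rw [show p - 1 - 1 = p - 2 by ring]
      field_simp
    have hmono : ∀ ε : ℝ, 0 < ε → ε ≤ t → g ε ≤ g t := by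
      intro ε hε hεt
      have hM : MonotoneOn g (Icc ε t) := by
        apply monotoneOn_of_deriv_nonneg (convex_Icc ε t)
        · intro u hu
          exact ((hgd u (lt_of_lt_of_le hε hu.1)).continuousAt).continuousWithinAt
        · intro u hu
          rw [interior_Icc] at hu
          exact ((hgd u (lt_trans hε hu.1)).differentiableAt).differentiableWithinAt
        · intro u hu
          rw [interior_Icc] at hu
          have hu0 : 0 < u := lt_trans hε hu.1
          rw [(hgd u hu0).deriv]
          have h1 := (key u hu0).1
          have h2 : c₁ * u ^ (p - 2) ≤ l u / u := by
            rw [show p - 2 = p - 1 - 1 by ring, Real.rpow_sub_one (ne_of_gt hu0), mul_div_assoc']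
            exact (div_le_div_iff_of_pos_right hu0).mpr (hl_bound u hu0).1
          linarith
      exact hM (left_mem_Icc.mpr hεt) (right_mem_Icc.mpr hεt) hεt
    -- limit as ε → 0⁺
    have h1 : Tendsto (fun u : ℝ => u ^ (p - 1)) (nhdsWithin 0 (Ioi 0)) (nhds 0) := by
      have h := (Real.continuousAt_rpow_const 0 (p - 1) (Or.inr hp1.le)).tendsto
      rw [Real.zero_rpow (ne_of_gt hp1)] at h
      exact h.mono_left nhdsWithin_le_nhds
    have hgt : Tendsto g (nhdsWithin 0 (Ioi 0)) (nhds (0 - c₁ / (p - 1) * 0)) :=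
      ha₀_lim.sub (h1.const_mul _)
    rw [mul_zero, sub_zero] at hgt
    have h0le : 0 ≤ g t := by
      refine le_of_tendsto hgt ?_
      filter_upwards [Ioo_mem_nhdsGT_of_mem (by exact ⟨le_refl 0, ht⟩ : (0:ℝ) ∈ Ico 0 t)] with ε hε
      exact hmono ε hε.1 hε.2.le
    simpa [hg, sub_nonneg] using h0le
  -- upper bound on a₀ t * t
  set C : ℝ := 2 * c₃ * c₂ / (p - 1) with hC
  have hCpos : 0 < C := by positivity
  set K : ℝ := a₀ 1 + C with hK
  have ha01 : 0 < a₀ 1 := ha₀_pos 1 one_pos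
  have hKpos : 0 < K := by positivity
  have fup : ∀ u : ℝ, 1 ≤ u → a₀ u * u ≤ a₀ 1 + C * u ^ (p - 1) := by
    intro u hu
    set h : ℝ → ℝ := fun v => a₀ v * v - C * v ^ (p - 1) with hh
    have hhd : ∀ v : ℝ, 0 < v →
        HasDerivAt h (a₀' v * v + a₀ v - 2 * c₃ * c₂ * v ^ (p - 2)) v := by
      intro v hv
      have h2 : HasDerivAt (fun w : ℝ => C * w ^ (p - 1))
          (C * ((p - 1) * v ^ (p - 1 - 1))) v :=
        (Real.hasDerivAt_rpow_const (Or.inl (ne_of_gt hv))).const_mul _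
      have h3 := (hfd v hv).sub h2
      convert h3 using 1
      · rfl
      · rfl
      · rfl
      rw [show p - 1 - 1 = p - 2 by ring, hC]
      field_simp
    have hA : AntitoneOn h (Icc 1 u) := by
      apply antitoneOn_of_deriv_nonpos (convex_Icc 1 u)
      · intro v hv
        exact ((hhd v (lt_of_lt_of_le one_pos hv.1)).continuousAt).continuousWithinAt
      · intro v hv
        rw [interior_Icc] at hv
        exact ((hhd v (lt_trans one_pos hv.1)).differentiableAt).differentiableWithinAt
      · intro v hv
        rw [interior_Icc] at hv
        have hv1 : (1:ℝ) < v := hv.1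
        have hv0 : 0 < v := lt_trans one_pos hv1
        rw [(hhd v hv0).deriv]
        have h1 := (key v hv0).2
        have h2 : c₃ * l v / v ≤ c₃ * c₂ * (v ^ (s - 2) + v ^ (p - 2)) := by
          have e1 : v ^ (s - 1) = v ^ (s - 2) * v := by
            rw [← Real.rpow_add_one (ne_of_gt hv0) (s - 2)]
            congr 1
            ring
          have e2 : v ^ (p - 1) = v ^ (p - 2) * v := by
            rw [← Real.rpow_add_one (ne_of_gt hv0) (p - 2)]
            congr 1
            ring
          have hb := (hl_bound v hv0).2
          rw [e1, e2] at hb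
          rw [div_le_iff₀ hv0]
          calc c₃ * l v ≤ c₃ * (c₂ * (v ^ (s - 2) * v + v ^ (p - 2) * v)) :=
                mul_le_mul_of_nonneg_left hb hc₃.le
            _ = c₃ * c₂ * (v ^ (s - 2) + v ^ (p - 2)) * v := by ring
        have h3 : v ^ (s - 2) ≤ v ^ (p - 2) :=
          Real.rpow_le_rpow_of_exponent_le hv1.le (by linarith)
        nlinarith [mul_le_mul_of_nonneg_left h3 (mul_nonneg hc₃.le hc₂.le)]
    have h4 := hA (left_mem_Icc.mpr hu) (right_mem_Icc.mpr hu) hu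
    simp only [hh, Real.one_rpow, mul_one] at h4
    linarith
  -- global upper bound
  have fbound : ∀ u : ℝ, 0 ≤ u → a₀ u * u ≤ K * (1 + u ^ (p - 1)) := by
    intro u hu
    rcases eq_or_lt_of_le hu with h0 | h0
    · rw [← h0]
      simp only [mul_zero]
      positivity
    rcases le_or_gt u 1 with h1 | h1
    · have hm : a₀ u ≤ a₀ 1 := by
        rcases eq_or_lt_of_le h1 with h2 | h2
        · rw [h2]
        · exact (ha₀_mono h0 (mem_Ioi.mpr one_pos) h2).le
      have hpow : 0 ≤ u ^ (p - 1) := Real.rpow_nonneg hu _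
      have : a₀ u * u ≤ a₀ 1 * 1 :=
        mul_le_mul hm h1 hu (ha₀_pos 1 one_pos).le
      nlinarith
    · have := fup u h1.le
      have hpow : 0 ≤ u ^ (p - 1) := Real.rpow_nonneg hu _
      nlinarith
  -- integrability of a₀ u * u on [0, T]
  have hrpow_cont : Continuous (fun u : ℝ => u ^ (p - 1)) :=
    continuous_iff_continuousAt.mpr fun x => Real.continuousAt_rpow_const x _ (Or.inr hp1.le)
  have hfint : ∀ T : ℝ, 0 ≤ T → IntervalIntegrable (fun u => a₀ u * u) volume 0 T := by
    intro T hT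
    rw [intervalIntegrable_iff_integrableOn_Ioc_of_le hT]
    have hmeas : AEStronglyMeasurable (fun u => a₀ u * u) (volume.restrict (Ioc 0 T)) := by
      apply ContinuousOn.aestronglyMeasurable _ measurableSet_Ioc
      intro u hu
      exact (((ha₀_deriv u hu.1).continuousAt.mul continuousAt_id)).continuousWithinAt
    have hbdd : IntegrableOn (fun _ : ℝ => K * (1 + T ^ (p - 1))) (Ioc 0 T) volume :=
      (integrableOn_const_iff enorm_ne_top).mpr (Or.inr measure_Ioc_lt_top)
    apply Integrable.mono' hbdd hmeas
    filter_upwards [ae_restrict_mem measurableSet_Ioc] with u hu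
    have h0 : 0 < u := hu.1
    rw [Real.norm_eq_abs, abs_of_nonneg (mul_nonneg (ha₀_pos u h0).le h0.le)]
    have h1 : u ^ (p - 1) ≤ T ^ (p - 1) := Real.rpow_le_rpow h0.le hu.2 hp1.le
    calc a₀ u * u ≤ K * (1 + u ^ (p - 1)) := fbound u h0.le
      _ ≤ K * (1 + T ^ (p - 1)) := mul_le_mul_of_nonneg_left (by linarith) hKpos.le
  -- value of rpow integral
  have hint_rpow : ∀ T : ℝ, 0 ≤ T → ∫ u in (0:ℝ)..T, u ^ (p - 1) = T ^ p / p := by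
    intro T hT
    rw [integral_rpow (Or.inl (by linarith : (-1:ℝ) < p - 1)),
      show p - 1 + 1 = p by ring, Real.zero_rpow (ne_of_gt hp)]
    ring
  refine ⟨2 * K, by positivity, ?_⟩
  intro y
  set T : ℝ := ‖y‖ with hT
  have hT0 : (0:ℝ) ≤ T := norm_nonneg y
  have hTpow : (0:ℝ) ≤ T ^ p := Real.rpow_nonneg hT0 _
  constructor
  · -- lower bound
    have hmono : ∫ u in (0:ℝ)..T, c₁ / (p - 1) * u ^ (p - 1) ≤ ∫ u in (0:ℝ)..T, a₀ u * u := by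
      apply integral_mono_on hT0 ((hrpow_cont.intervalIntegrable 0 T).const_mul _)
        (hfint T hT0)
      intro x hx
      rcases eq_or_lt_of_le hx.1 with h0 | h0
      · rw [← h0, Real.zero_rpow (ne_of_gt hp1)]
        simp
      · exact glow x h0
    rw [intervalIntegral.integral_const_mul, hint_rpow T hT0] at hmono
    rw [hG₀]
    calc c₁ / (p * (p - 1)) * T ^ p = c₁ / (p - 1) * (T ^ p / p) := by
          rw [mul_comm p (p-1), ← div_div, div_mul_eq_mul_div, mul_div_assoc]
      _ ≤ _ := hmono
  · -- upper bound
    have hmono : ∫ u in (0:ℝ)..T, a₀ u * u ≤ ∫ u in (0:ℝ)..T, K * (1 + u ^ (p - 1)) := by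
      apply integral_mono_on hT0 (hfint T hT0)
        (((continuous_const.add hrpow_cont).intervalIntegrable 0 T).const_mul _)
      intro x hx
      exact fbound x hx.1
    have hval : ∫ u in (0:ℝ)..T, K * (1 + u ^ (p - 1)) = K * (T + T ^ p / p) := by
      rw [intervalIntegral.integral_const_mul, integral_add intervalIntegrable_const
        (hrpow_cont.intervalIntegrable 0 T), hint_rpow T hT0, intervalIntegral.integral_const,
        smul_eq_mul, sub_zero, mul_one]
    rw [hval] at hmono
    rw [hG₀]
    refine hmono.trans ?_
    have hT1 : T ≤ 1 + T ^ p := by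
      rcases le_or_gt T 1 with h1 | h1
      · linarith
      · have : T ^ (1:ℝ) ≤ T ^ p := Real.rpow_le_rpow_of_exponent_le h1.le (by linarith)
        rw [Real.rpow_one] at this
        linarith
    have hTp : T ^ p / p ≤ T ^ p := by
      rw [div_le_iff₀ hp]
      nlinarith [mul_nonneg hTpow hp1.le]
    calc K * (T + T ^ p / p) ≤ K * ((1 + T ^ p) + T ^ p) :=
          mul_le_mul_of_nonneg_left (by linarith) hKpos.le
      _ ≤ 2 * K * (1 + T ^ p) := by
          have hid : K * ((1 + T ^ p) + T ^ p) = 2 * K * (1 + T ^ p) - K := by ring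
          linarith
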